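/- Let 0 < L < d₃. Define h on the interval I = [(d₃ − L)/2, (d₃ + L)/2] by h(d₁) = √(1 − (2d₁ − d₃)²/L²) / d₁³. Then h attains its global maximum on I at the unique point d₁* = (5 d₃ − √(d₃² + 24 L²)) / 8; moreover, the interior critical points of h are exactly the roots of 8 d₁² − 10 d₃ d₁ + 3(d₃² − L²) = 0 lying in the open interval, and d₁* is the only such root, while the other root (5 d₃ + √(d₃² + 24 L²))/8 lies outside I. -/

import Mathlib

open Real

/-- Theorem 1, linear power scaling case: on the ellipse parametrized by the distance `d₁`
to the transmitter, the linear-regime objective `h(d₁) = √(1 − (2d₁ − d₃)²/L²)/d₁³` is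
maximized on `I = [(d₃−L)/2, (d₃+L)/2]` at the unique point
`d₁* = (5d₃ − √(d₃² + 24L²))/8`; the interior critical points of `h` are exactly the roots
of `8d₁² − 10 d₃ d₁ + 3(d₃² − L²) = 0` in the open interval, `d₁*` is the only such root,
and the other root `(5d₃ + √(d₃² + 24L²))/8` lies outside `I`. -/
theorem optimal_placement_linear (d₃ L : ℝ) (hL : 0 < L) (hLd : L < d₃)
    (h : ℝ → ℝ)
    (hh : ∀ x, h x = Real.sqrt (1 - (2 * x - d₃) ^ 2 / L ^ 2) / x ^ 3) :
    ({x ∈ Set.Icc ((d₃ - L) / 2) ((d₃ + L) / 2) |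
        ∀ y ∈ Set.Icc ((d₃ - L) / 2) ((d₃ + L) / 2), h y ≤ h x} =
      {(5 * d₃ - Real.sqrt (d₃ ^ 2 + 24 * L ^ 2)) / 8}) ∧
    ({x ∈ Set.Ioo ((d₃ - L) / 2) ((d₃ + L) / 2) | deriv h x = 0} =
      {x ∈ Set.Ioo ((d₃ - L) / 2) ((d₃ + L) / 2) |
        8 * x ^ 2 - 10 * d₃ * x + 3 * (d₃ ^ 2 - L ^ 2) = 0}) ∧
    ({x ∈ Set.Ioo ((d₃ - L) / 2) ((d₃ + L) / 2) |
        8 * x ^ 2 - 10 * d₃ * x + 3 * (d₃ ^ 2 - L ^ 2) = 0} =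
      {(5 * d₃ - Real.sqrt (d₃ ^ 2 + 24 * L ^ 2)) / 8}) ∧
    (5 * d₃ + Real.sqrt (d₃ ^ 2 + 24 * L ^ 2)) / 8 ∉
      Set.Icc ((d₃ - L) / 2) ((d₃ + L) / 2) := by
  set a := (d₃ - L) / 2 with hadef
  set b := (d₃ + L) / 2 with hbdef
  set s := Real.sqrt (d₃ ^ 2 + 24 * L ^ 2) with hsdef
  have hsnn : 0 ≤ s := Real.sqrt_nonneg _
  have hs2 : s ^ 2 = d₃ ^ 2 + 24 * L ^ 2 := Real.sq_sqrt (by positivity)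
  have ha0 : 0 < a := by rw [hadef]; linarith
  have hab : a < b := by rw [hadef, hbdef]; linarith
  have hstar1 : a < (5 * d₃ - s) / 8 := by rw [hadef]; nlinarith
  have hstar2 : (5 * d₃ - s) / 8 < b := by rw [hbdef]; nlinarith
  have hplus : b < (5 * d₃ + s) / 8 := by rw [hbdef]; nlinarith
  -- positivity of the inside on the open interval
  have hg : ∀ x ∈ Set.Ioo a b, 0 < 1 - (2 * x - d₃) ^ 2 / L ^ 2 := by
    rintro x ⟨hx1, hx2⟩
    have h1 : (2 * x - d₃) ^ 2 < L ^ 2 := by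
      rw [hadef] at hx1; rw [hbdef] at hx2; nlinarith
    have h2 : (2 * x - d₃) ^ 2 / L ^ 2 < 1 := by
      rw [div_lt_one (by positivity)]; exact h1
    linarith
  -- critical point characterization
  have hcrit : ∀ x ∈ Set.Ioo a b,
      (deriv h x = 0 ↔ 8 * x ^ 2 - 10 * d₃ * x + 3 * (d₃ ^ 2 - L ^ 2) = 0) := by
    intro x hx
    obtain ⟨hx1, hx2⟩ := hx
    have hx0 : 0 < x := lt_trans ha0 hx1
    have hgx : 0 < 1 - (2 * x - d₃) ^ 2 / L ^ 2 := hg x ⟨hx1, hx2⟩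
    have hfun : h = fun y => Real.sqrt (1 - (2 * y - d₃) ^ 2 / L ^ 2) / y ^ 3 := funext hh
    have h1 : HasDerivAt (fun y : ℝ => 2 * y - d₃) 2 x := by
      simpa using ((hasDerivAt_id x).const_mul 2).sub_const d₃
    have h2 : HasDerivAt (fun y : ℝ => (2 * y - d₃) ^ 2) (2 * (2 * x - d₃) * 2) x := by
      simpa using h1.fun_pow 2
    have h3 : HasDerivAt (fun y : ℝ => 1 - (2 * y - d₃) ^ 2 / L ^ 2)
        (-(2 * (2 * x - d₃) * 2 / L ^ 2)) x := (h2.div_const _).const_sub 1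
    have h4 := h3.sqrt hgx.ne'
    have h5 : HasDerivAt (fun y : ℝ => y ^ 3) (3 * x ^ 2) x := by
      simpa using hasDerivAt_pow 3 x
    have h6 := h4.fun_div h5 (pow_ne_zero 3 hx0.ne')
    rw [hfun, h6.deriv]
    set t := Real.sqrt (1 - (2 * x - d₃) ^ 2 / L ^ 2) with htdef
    have ht : 0 < t := Real.sqrt_pos.mpr hgx
    have ht2 : t ^ 2 = 1 - (2 * x - d₃) ^ 2 / L ^ 2 := Real.sq_sqrt hgx.le
    rw [div_eq_zero_iff]
    have hden : ((x ^ 3 : ℝ) ^ 2) ≠ 0 := by positivity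
    have hkey : (-(2 * (2 * x - d₃) * 2 / L ^ 2) / (2 * t) * x ^ 3 - t * (3 * x ^ 2)) *
          (2 * t * L ^ 2)
        = 2 * x ^ 2 * (8 * x ^ 2 - 10 * d₃ * x + 3 * (d₃ ^ 2 - L ^ 2)) := by
      have ht2' : L ^ 2 * t ^ 2 = L ^ 2 - (2 * x - d₃) ^ 2 := by
        rw [ht2]; field_simp
      field_simp
      linear_combination (-3) * ht2'
    constructor
    · rintro (hN | hc)
      · rw [hN] at hkey
        have hx2ne : (0:ℝ) < x ^ 2 := by positivity
        nlinarith
      · exact absurd hc hden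
    · intro hQ
      left
      have h0 : (-(2 * (2 * x - d₃) * 2 / L ^ 2) / (2 * t) * x ^ 3 - t * (3 * x ^ 2)) *
          (2 * t * L ^ 2) = 0 := by rw [hkey, hQ]; ring
      have hne : (2 * t * L ^ 2) ≠ 0 := by positivity
      exact (mul_eq_zero.mp h0).resolve_right hne
  -- root characterization
  have hroot : ∀ x ∈ Set.Ioo a b,
      (8 * x ^ 2 - 10 * d₃ * x + 3 * (d₃ ^ 2 - L ^ 2) = 0 ↔ x = (5 * d₃ - s) / 8) := by
    intro x hx
    constructor
    · intro hQ
      have hfac : 8 * (x - (5 * d₃ - s) / 8) * (x - (5 * d₃ + s) / 8) = 0 := by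
        linear_combination hQ - (1 / 8) * hs2
      have hxne : x - (5 * d₃ + s) / 8 ≠ 0 := by
        have := hx.2
        intro hc
        have : x = (5 * d₃ + s) / 8 := by linarith
        rw [this] at hx
        exact absurd hx.2 (not_lt.mpr hplus.le)
      rcases mul_eq_zero.mp hfac with h8 | hc
      · rcases mul_eq_zero.mp h8 with h8' | hc'
        · norm_num at h8'
        · linarith
      · exact absurd hc hxne
    · intro hx'
      rw [hx']
      linear_combination (1 / 8) * hs2
  have hstarIoo : (5 * d₃ - s) / 8 ∈ Set.Ioo a b := ⟨hstar1, hstar2⟩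
  -- part 4
  have hpart4 : (5 * d₃ + s) / 8 ∉ Set.Icc a b := by
    intro hc
    exact absurd hc.2 (not_le.mpr hplus)
  -- part 3
  have hpart3 : {x ∈ Set.Ioo a b | 8 * x ^ 2 - 10 * d₃ * x + 3 * (d₃ ^ 2 - L ^ 2) = 0} =
      {(5 * d₃ - s) / 8} := by
    ext x
    simp only [Set.mem_setOf_eq, Set.mem_singleton_iff]
    constructor
    · rintro ⟨hx, hQ⟩
      exact (hroot x hx).mp hQ
    · rintro rfl
      exact ⟨hstarIoo, (hroot _ hstarIoo).mpr rfl⟩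
  -- part 2
  have hpart2 : {x ∈ Set.Ioo a b | deriv h x = 0} =
      {x ∈ Set.Ioo a b | 8 * x ^ 2 - 10 * d₃ * x + 3 * (d₃ ^ 2 - L ^ 2) = 0} := by
    ext x
    simp only [Set.mem_setOf_eq]
    constructor
    · rintro ⟨hx, hd⟩
      exact ⟨hx, (hcrit x hx).mp hd⟩
    · rintro ⟨hx, hQ⟩
      exact ⟨hx, (hcrit x hx).mpr hQ⟩
  -- part 1
  have hcont : ContinuousOn h (Set.Icc a b) := by
    have hfun : h = fun y => Real.sqrt (1 - (2 * y - d₃) ^ 2 / L ^ 2) / y ^ 3 := funext hh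
    rw [hfun]
    have hc1 : Continuous (fun y : ℝ => 1 - (2 * y - d₃) ^ 2 / L ^ 2) :=
      continuous_const.sub
        ((((continuous_const.mul continuous_id).sub continuous_const).pow 2).div_const _)
    apply ContinuousOn.div
    · exact (Real.continuous_sqrt.comp hc1).continuousOn
    · exact (continuous_pow 3).continuousOn
    · intro y hy
      exact pow_ne_zero 3 (lt_of_lt_of_le ha0 hy.1).ne'
  have hstarpos : 0 < h ((5 * d₃ - s) / 8) := by
    rw [hh]
    apply div_pos (Real.sqrt_pos.mpr (hg _ hstarIoo))
    have := lt_trans ha0 hstar1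
    positivity
  have hend : ∀ x ∈ Set.Icc a b, (x = a ∨ x = b) → h x = 0 := by
    rintro x _ (rfl | rfl) <;> rw [hh]
    · have : 1 - (2 * a - d₃) ^ 2 / L ^ 2 = 0 := by
        rw [hadef]; field_simp; ring
      rw [this, Real.sqrt_zero, zero_div]
    · have : 1 - (2 * b - d₃) ^ 2 / L ^ 2 = 0 := by
        rw [hbdef]; field_simp; ring
      rw [this, Real.sqrt_zero, zero_div]
  have hmaxsub : {x ∈ Set.Icc a b | ∀ y ∈ Set.Icc a b, h y ≤ h x} ⊆ {(5 * d₃ - s) / 8} := by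
    rintro x ⟨hx, hmax⟩
    have hxpos : 0 < h x := lt_of_lt_of_le hstarpos
      (hmax _ ⟨hstar1.le, hstar2.le⟩)
    have hxa : x ≠ a := by
      intro rfl'
      rw [hend x hx (Or.inl rfl')] at hxpos; exact lt_irrefl 0 hxpos
    have hxb : x ≠ b := by
      intro rfl'
      rw [hend x hx (Or.inr rfl')] at hxpos; exact lt_irrefl 0 hxpos
    have hxIoo : x ∈ Set.Ioo a b := ⟨lt_of_le_of_ne hx.1 (Ne.symm hxa), lt_of_le_of_ne hx.2 hxb⟩
    have hlocal : IsLocalMax h x := by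
      have hnhds : Set.Icc a b ∈ nhds x := Icc_mem_nhds hxIoo.1 hxIoo.2
      exact Filter.eventually_of_mem hnhds hmax
    have hderiv0 : deriv h x = 0 := hlocal.deriv_eq_zero
    exact (hroot x hxIoo).mp ((hcrit x hxIoo).mp hderiv0)
  have hpart1 : {x ∈ Set.Icc a b | ∀ y ∈ Set.Icc a b, h y ≤ h x} = {(5 * d₃ - s) / 8} := by
    obtain ⟨c, hc, hcmax⟩ := isCompact_Icc.exists_isMaxOn (Set.nonempty_Icc.mpr hab.le) hcont
    have hcS : c ∈ {x ∈ Set.Icc a b | ∀ y ∈ Set.Icc a b, h y ≤ h x} :=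
      ⟨hc, fun y hy => hcmax hy⟩
    have hceq : c = (5 * d₃ - s) / 8 := hmaxsub hcS
    apply Set.Subset.antisymm hmaxsub
    intro x hx
    rw [Set.mem_singleton_iff] at hx
    rw [hx, ← hceq]
    exact hcS
  exact ⟨hpart1, hpart2, hpart3, hpart4⟩
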